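/- With Φ_m as in the three-term recurrence Φ_m = (a_m x + b_m)Φ_{m−1} − c_m Φ_{m−2} (a_m c_m ≠ 0), one has Res(Φ_n + s·Φ_{n−1}, Φ_{n−1}) = Res(Φ_n, Φ_{n−1}) = (−1)^{n(n−1)/2} ∏_{k=1}^n a_k^{2n−2k} c_k^{k−1} for every n ≥ 2 and every constant s. -/

import Mathlib

open Polynomial

noncomputable def Res (f g : Polynomial ℂ) : ℂ :=
  f.leadingCoeff ^ g.natDegree * (f.roots.map (fun a => g.eval a)).prod

lemma myCardRoots (p : ℂ[X]) : p.roots.card = p.natDegree :=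
  splits_iff_card_roots.mp (IsAlgClosed.splits p)

lemma eval_prod_roots (p : ℂ[X]) (x : ℂ) :
    p.eval x = p.leadingCoeff * (p.roots.map fun a => x - a).prod :=
  (IsAlgClosed.splits p).eval_eq_prod_roots x

lemma multiset_prod_comm (M N : Multiset ℂ) (h : ℂ → ℂ → ℂ) :
    (M.map (fun α => (N.map (h α)).prod)).prod
      = (N.map (fun β => (M.map (fun α => h α β)).prod)).prod := by
  induction M using Multiset.induction with
  | empty => simp
  | cons x M ih => simp [Multiset.prod_map_mul, ih]

lemma prod_map_const_mul (M : Multiset ℂ) (c : ℂ) (h : ℂ → ℂ) :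
    (M.map (fun α => c * h α)).prod = c ^ M.card * (M.map h).prod := by
  induction M using Multiset.induction with
  | empty => simp
  | cons x M ih => simp [ih, pow_succ]; ring

lemma Res_double (f g : ℂ[X]) :
    Res f g = f.leadingCoeff ^ g.natDegree * g.leadingCoeff ^ f.natDegree *
      (f.roots.map (fun α => (g.roots.map (fun β => α - β)).prod)).prod := by
  unfold Res
  have : ∀ α : ℂ, g.eval α = g.leadingCoeff * (g.roots.map fun β => α - β).prod :=
    fun α => eval_prod_roots g α
  simp_rw [this]
  rw [prod_map_const_mul, myCardRoots]
  ring

lemma Res_swap (f g : ℂ[X]) :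
    Res f g = (-1) ^ (f.natDegree * g.natDegree) * Res g f := by
  rw [Res_double, Res_double]
  have key : (f.roots.map (fun α => (g.roots.map (fun β => α - β)).prod)).prod
      = (-1) ^ (f.natDegree * g.natDegree) *
        (g.roots.map (fun β => (f.roots.map (fun α => β - α)).prod)).prod := by
    have h1 : ∀ α : ℂ, (g.roots.map (fun β => α - β)).prod
        = (-1) ^ g.natDegree * (g.roots.map (fun β => β - α)).prod := by
      intro α
      have : (g.roots.map (fun β => α - β)) = (g.roots.map (fun β => β - α)).map (-·) := by
        rw [Multiset.map_map]; simp
      rw [this, Multiset.prod_map_neg, Multiset.card_map, myCardRoots]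
    simp_rw [h1]
    rw [prod_map_const_mul, myCardRoots, ← pow_mul, Nat.mul_comm g.natDegree,
      multiset_prod_comm]
  rw [key]; ring

section Main
variable (a b c : ℕ → ℂ) (Φ : ℕ → Polynomial ℂ)

lemma phi_struct
    (habc : ∀ k, 1 ≤ k → a k ≠ 0 ∧ c k ≠ 0)
    (h0 : Φ 0 = 1) (h1 : Φ 1 = C (a 1) * X + C (b 1))
    (hrec : ∀ m, 2 ≤ m →
      Φ m = (C (a m) * X + C (b m)) * Φ (m - 1) - C (c m) * Φ (m - 2)) :
    ∀ m, (Φ m).natDegree = m ∧ (Φ m).leadingCoeff = ∏ k ∈ Finset.Icc 1 m, a k := by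
  intro m
  induction m using Nat.strong_induction_on with
  | _ m ih =>
    match m with
    | 0 => simp [h0]
    | 1 =>
      refine ⟨?_, ?_⟩
      · rw [h1]; exact natDegree_linear (habc 1 le_rfl).1
      · rw [h1, leadingCoeff_linear (habc 1 le_rfl).1]; simp
    | (m+2) =>
      obtain ⟨hd1, hl1⟩ := ih (m+1) (by omega)
      have hΦ1ne : Φ (m+1) ≠ 0 := by
        intro h; rw [h, natDegree_zero] at hd1; omega
      have hLdeg : (C (a (m+2)) * X + C (b (m+2))).natDegree = 1 :=
        natDegree_linear (habc (m+2) (by omega)).1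
      have hLne : (C (a (m+2)) * X + C (b (m+2))) ≠ 0 := by
        intro h; rw [h, natDegree_zero] at hLdeg; omega
      have hmul_deg : ((C (a (m+2)) * X + C (b (m+2))) * Φ (m+1)).natDegree = m + 2 := by
        rw [natDegree_mul hLne hΦ1ne, hLdeg, hd1]; omega
      have hmul_ne : (C (a (m+2)) * X + C (b (m+2))) * Φ (m+1) ≠ 0 := mul_ne_zero hLne hΦ1ne
      have hsub_deg : (C (c (m+2)) * Φ m).degree <
          ((C (a (m+2)) * X + C (b (m+2))) * Φ (m+1)).degree := by
        have h2 : (C (c (m+2)) * Φ m).natDegree ≤ m := by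
          refine le_trans (natDegree_mul_le) ?_
          rw [natDegree_C, (ih m (by omega)).1]; omega
        rw [degree_eq_natDegree hmul_ne, hmul_deg]
        calc (C (c (m+2)) * Φ m).degree ≤ ((C (c (m+2)) * Φ m).natDegree : WithBot ℕ) :=
              degree_le_natDegree
          _ < ((m + 2 : ℕ) : WithBot ℕ) := by
              exact_mod_cast lt_of_le_of_lt h2 (by omega : m < m + 2)
      have heq := hrec (m+2) (by omega)
      simp only [Nat.add_sub_cancel, show m + 2 - 2 = m from rfl, show m + 2 - 1 = m + 1 from rfl] at heq
      have hsub_nat : (C (c (m+2)) * Φ m).natDegree <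
          ((C (a (m+2)) * X + C (b (m+2))) * Φ (m+1)).natDegree := by
        rw [hmul_deg]
        have h2 : (C (c (m+2)) * Φ m).natDegree ≤ 0 + m := by
          refine le_trans (natDegree_mul_le) ?_
          rw [natDegree_C, (ih m (by omega)).1]
        omega
      constructor
      · rw [heq, natDegree_sub_eq_left_of_natDegree_lt hsub_nat, hmul_deg]
      · rw [heq, leadingCoeff_sub_of_degree_lt hsub_deg, leadingCoeff_mul,
          leadingCoeff_linear (habc (m+2) (by omega)).1, hl1,
          Finset.prod_Icc_succ_top (by omega : 1 ≤ m + 2)]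
        ring

lemma res_formula
    (habc : ∀ k, 1 ≤ k → a k ≠ 0 ∧ c k ≠ 0)
    (h0 : Φ 0 = 1) (h1 : Φ 1 = C (a 1) * X + C (b 1))
    (hrec : ∀ m, 2 ≤ m →
      Φ m = (C (a m) * X + C (b m)) * Φ (m - 1) - C (c m) * Φ (m - 2)) :
    ∀ m, Res (Φ (m+1)) (Φ m) = (-1) ^ ((m+1) * m / 2) *
      ∏ k ∈ Finset.Icc 1 (m+1), a k ^ (2 * (m+1) - 2 * k) * c k ^ (k - 1) := by
  have struct := phi_struct a b c Φ habc h0 h1 hrec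
  intro m
  induction m with
  | zero =>
    unfold Res
    rw [h0]
    simp
  | succ m ih =>
    have key : Res (Φ (m+1)) (Φ (m+2)) = (Φ (m+1)).leadingCoeff ^ 2 *
        (-(c (m+2))) ^ (m+1) * Res (Φ (m+1)) (Φ m) := by
      unfold Res
      have hmap : (Φ (m+1)).roots.map (fun x => (Φ (m+2)).eval x)
          = (Φ (m+1)).roots.map (fun x => -(c (m+2)) * (Φ m).eval x) := by
        apply Multiset.map_congr rfl
        intro x hx
        have hx0 : (Φ (m+1)).eval x = 0 := (mem_roots'.mp hx).2
        rw [hrec (m+2) (by omega)]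
        simp [show m+2-1 = m+1 from rfl, show m+2-2 = m from rfl, hx0]
      rw [hmap, prod_map_const_mul, myCardRoots, (struct (m+1)).1, (struct m).1,
        (struct (m+2)).1]
      ring
    have e1 : Res (Φ (m+2)) (Φ (m+1)) = Res (Φ (m+1)) (Φ (m+2)) := by
      rw [Res_swap, (struct (m+2)).1, (struct (m+1)).1, Even.neg_one_pow, one_mul]
      exact (by rw [Nat.mul_comm]; exact Nat.even_mul_succ_self (m+1))
    have hexp : (m+2) * (m+1) / 2 = (m+1) + (m+1) * m / 2 := by
      obtain ⟨t, ht⟩ := Nat.even_mul_succ_self m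
      have e2 : (m+2) * (m+1) = 2 * (m+1) + m * (m+1) := by ring
      have e3 : (m+1) * m = m * (m+1) := by ring
      omega
    have hsplit : ∏ k ∈ Finset.Icc 1 (m+2), a k ^ (2 * (m+2) - 2 * k) * c k ^ (k-1)
        = (∏ k ∈ Finset.Icc 1 (m+1), a k) ^ 2 * c (m+2) ^ (m+1) *
          ∏ k ∈ Finset.Icc 1 (m+1), a k ^ (2 * (m+1) - 2 * k) * c k ^ (k-1) := by
      rw [Finset.prod_Icc_succ_top (by omega : 1 ≤ m + 2)]
      have hpt : ∀ k ∈ Finset.Icc 1 (m+1), a k ^ (2 * (m+2) - 2 * k) * c k ^ (k-1)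
          = (a k) ^ 2 * (a k ^ (2 * (m+1) - 2 * k) * c k ^ (k-1)) := by
        intro k hk
        obtain ⟨hk1, hk2⟩ := Finset.mem_Icc.mp hk
        have h4 : 2 * (m+2) - 2 * k = 2 + (2 * (m+1) - 2 * k) := by omega
        rw [h4, pow_add]; ring
      rw [Finset.prod_congr rfl hpt, Finset.prod_mul_distrib, Finset.prod_pow,
        show 2 * (m+2) - 2 * (m+2) = 0 by omega, show m + 2 - 1 = m + 1 from rfl]
      ring
    rw [e1, key, ih, hexp, pow_add, hsplit, (struct (m+1)).2, neg_pow]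
    ring

end Main

theorem stmt_6 (a b c : ℕ → ℂ) (Φ : ℕ → Polynomial ℂ)
    (habc : ∀ k, 1 ≤ k → a k ≠ 0 ∧ c k ≠ 0)
    (h0 : Φ 0 = 1) (h1 : Φ 1 = C (a 1) * X + C (b 1))
    (hrec : ∀ m, 2 ≤ m →
      Φ m = (C (a m) * X + C (b m)) * Φ (m - 1) - C (c m) * Φ (m - 2))
    (n : ℕ) (hn : 2 ≤ n) (s : ℂ) :
    Res (Φ n + C s * Φ (n - 1)) (Φ (n - 1)) = Res (Φ n) (Φ (n - 1)) ∧
      Res (Φ n) (Φ (n - 1)) =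
        (-1) ^ (n * (n - 1) / 2) *
          ∏ k ∈ Finset.Icc 1 n, a k ^ (2 * n - 2 * k) * c k ^ (k - 1) := by
  have struct := phi_struct a b c Φ habc h0 h1 hrec
  have hn1 : n - 1 + 1 = n := by omega
  have part2 : Res (Φ n) (Φ (n - 1)) =
      (-1) ^ (n * (n - 1) / 2) *
        ∏ k ∈ Finset.Icc 1 n, a k ^ (2 * n - 2 * k) * c k ^ (k - 1) := by
    have := res_formula a b c Φ habc h0 h1 hrec (n - 1)
    rw [hn1] at this
    exact this
  refine ⟨?_, part2⟩
  -- part 1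
  have heven : Even (n * (n - 1)) := by
    have := Nat.even_mul_succ_self (n - 1)
    rw [hn1] at this
    rwa [Nat.mul_comm]
  have hlt : (C s * Φ (n-1)).natDegree < (Φ n).natDegree := by
    rw [(struct n).1]
    have h2 : (C s * Φ (n-1)).natDegree ≤ 0 + (n-1) := by
      refine le_trans natDegree_mul_le ?_
      rw [natDegree_C, (struct (n-1)).1]
    omega
  have hd' : (Φ n + C s * Φ (n-1)).natDegree = n := by
    rw [natDegree_add_eq_left_of_natDegree_lt hlt, (struct n).1]
  have hmap : (Φ (n-1)).roots.map (fun x => (Φ n + C s * Φ (n-1)).eval x)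
      = (Φ (n-1)).roots.map (fun x => (Φ n).eval x) := by
    apply Multiset.map_congr rfl
    intro x hx
    have hx0 : (Φ (n-1)).eval x = 0 := (mem_roots'.mp hx).2
    simp [hx0]
  have e1 : Res (Φ (n-1)) (Φ n + C s * Φ (n-1)) = Res (Φ (n-1)) (Φ n) := by
    unfold Res
    rw [hmap, hd', (struct n).1]
  calc Res (Φ n + C s * Φ (n-1)) (Φ (n-1))
      = (-1) ^ ((Φ n + C s * Φ (n-1)).natDegree * (Φ (n-1)).natDegree) *
        Res (Φ (n-1)) (Φ n + C s * Φ (n-1)) := Res_swap _ _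
    _ = Res (Φ (n-1)) (Φ n) := by
        rw [hd', (struct (n-1)).1, Even.neg_one_pow heven, one_mul, e1]
    _ = Res (Φ n) (Φ (n-1)) := by
        rw [Res_swap, (struct (n-1)).1, (struct n).1, Even.neg_one_pow, one_mul]
        rwa [Nat.mul_comm] at heven
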